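/- arXiv:2410.08364 — 2 statements merged into one kernel-verified Lean document; each statement's English description precedes it below -/
import Mathlib

section
/- Let a₁,…,a_N, b ∈ ℝᵐ and p₁,…,p_N, s ∈ ℝ. Suppose for all β₁,…,β_N ≥ 0 with Σᵢ βᵢ aᵢ = b it holds that s + Σᵢ βᵢ (-pᵢ) ≥ 0 (i.e. ζ₂ ≥ 0), and the system {aᵢᵀ u ≥ pᵢ} is feasible. Then there exists u ∈ ℝᵐ satisfying aᵢᵀ u ≥ pᵢ for all i and bᵀ u ≤ s. -/
open Finset

lemma farkas_hom {V : Type*} [NormedAddCommGroup V] [InnerProductSpace ℝ V] :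
    ∀ (N : ℕ) (a : Fin N → V) (b : V),
      (∃ β : Fin N → ℝ, (∀ i, 0 ≤ β i) ∧ ∑ i, β i • a i = b) ∨
      (∃ u : V, (∀ i, (0:ℝ) ≤ inner ℝ (a i) u) ∧ (inner ℝ b u : ℝ) < 0) := by
  intro N
  induction N with
  | zero =>
    intro a b
    by_cases hb : b = 0
    · exact Or.inl ⟨0, fun i => le_refl _, by simp [hb]⟩
    · refine Or.inr ⟨-b, fun i => i.elim0, ?_⟩
      rw [inner_neg_right, neg_lt_zero]
      exact lt_of_not_ge fun h => hb (real_inner_self_nonpos.mp h)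
  | succ N IH =>
    intro a b
    by_cases hL : ∃ β : Fin (N+1) → ℝ, (∀ i, 0 ≤ β i) ∧ ∑ i, β i • a i = b
    · exact Or.inl hL
    right
    -- b is not in the cone of the first N vectors
    have hinit : ¬ ∃ β : Fin N → ℝ, (∀ i, 0 ≤ β i) ∧
        ∑ i, β i • a i.castSucc = b := by
      rintro ⟨β, hβ, hsum⟩
      refine hL ⟨Fin.snoc β 0, ?_, ?_⟩
      · intro i
        refine Fin.lastCases ?_ ?_ i <;> simp [hβ]
      · rw [Fin.sum_univ_castSucc]
        simpa using hsum
    obtain ⟨u, hu, hbu⟩ := (IH (fun i => a i.castSucc) b).resolve_left hinit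
    set c := a (Fin.last N) with hc
    by_cases hcu : (0:ℝ) ≤ inner ℝ c u
    · refine ⟨u, ?_, hbu⟩
      intro i
      refine Fin.lastCases ?_ ?_ i
      · exact hcu
      · exact hu
    push_neg at hcu
    have hcune : (inner ℝ c u : ℝ) ≠ 0 := ne_of_lt hcu
    set a' : Fin N → V :=
      fun i => a i.castSucc - ((inner ℝ (a i.castSucc) u : ℝ) / inner ℝ c u) • c with ha'
    set b' : V := b - ((inner ℝ b u : ℝ) / inner ℝ c u) • c with hb'
    have hinit' : ¬ ∃ β : Fin N → ℝ, (∀ i, 0 ≤ β i) ∧ ∑ i, β i • a' i = b' := by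
      rintro ⟨β, hβ, hsum⟩
      set γ : ℝ := (inner ℝ b u : ℝ) / inner ℝ c u
        - ∑ i, β i * ((inner ℝ (a i.castSucc) u : ℝ) / inner ℝ c u) with hγ
      have hγpos : 0 < γ := by
        have h1 : 0 < (inner ℝ b u : ℝ) / inner ℝ c u := div_pos_of_neg_of_neg hbu hcu
        have h2 : ∑ i, β i * ((inner ℝ (a i.castSucc) u : ℝ) / inner ℝ c u) ≤ 0 := by
          refine Finset.sum_nonpos fun i _ => ?_
          exact mul_nonpos_of_nonneg_of_nonpos (hβ i)
            (div_nonpos_of_nonneg_of_nonpos (hu i) (le_of_lt hcu))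
        rw [hγ]; linarith
      refine hL ⟨Fin.snoc β γ, ?_, ?_⟩
      · intro i
        refine Fin.lastCases ?_ ?_ i
        · simpa using hγpos.le
        · intro i; simpa using hβ i
      · rw [Fin.sum_univ_castSucc]
        simp only [Fin.snoc_castSucc, Fin.snoc_last]
        have expand : ∑ i, β i • a' i
            = ∑ i, β i • a i.castSucc
              - (∑ i, β i * ((inner ℝ (a i.castSucc) u : ℝ) / inner ℝ c u)) • c := by
          rw [Finset.sum_smul, ← Finset.sum_sub_distrib]
          refine Finset.sum_congr rfl fun i _ => ?_
          rw [ha']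
          simp [smul_sub, smul_smul]
        rw [expand, hb'] at hsum
        have : ∑ i, β i • a i.castSucc + γ • c = b := by
          rw [hγ, sub_smul]
          rw [sub_eq_iff_eq_add] at hsum
          rw [hsum]
          abel
        rw [← hc]
        exact this
    obtain ⟨w, hw, hbw⟩ := (IH a' b').resolve_left hinit'
    refine ⟨w - ((inner ℝ c w : ℝ) / inner ℝ c u) • u, ?_, ?_⟩
    · intro i
      refine Fin.lastCases ?_ ?_ i
      · rw [← hc, inner_sub_right, real_inner_smul_right, div_mul_cancel₀ _ hcune]
        simp
      · intro i
        have := hw i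
        rw [ha'] at this
        rw [inner_sub_left, real_inner_smul_left] at this
        rw [inner_sub_right, real_inner_smul_right]
        have key : (inner ℝ (a i.castSucc) u : ℝ) / inner ℝ c u * inner ℝ c w
            = (inner ℝ c w : ℝ) / inner ℝ c u * inner ℝ (a i.castSucc) u := by ring
        linarith [this, key.ge, key.le]
    · rw [inner_sub_right, real_inner_smul_right]
      rw [hb', inner_sub_left, real_inner_smul_left] at hbw
      have key : (inner ℝ b u : ℝ) / inner ℝ c u * inner ℝ c w
          = (inner ℝ c w : ℝ) / inner ℝ c u * inner ℝ b u := by ring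
      linarith


lemma farkas_affine {V : Type*} [NormedAddCommGroup V] [InnerProductSpace ℝ V]
    (N : ℕ) (c : Fin N → V) (q : Fin N → ℝ) :
    (∃ u : V, ∀ i, (inner ℝ (c i) u : ℝ) ≥ q i) ∨
    (∃ β : Fin N → ℝ, (∀ i, 0 ≤ β i) ∧ ∑ i, β i • c i = 0 ∧ 0 < ∑ i, β i * q i) := by
  set A : Fin N → WithLp 2 (V × ℝ) :=
    fun i => (WithLp.equiv 2 (V × ℝ)).symm (c i, -q i) with hA
  set B : WithLp 2 (V × ℝ) := (WithLp.equiv 2 (V × ℝ)).symm (0, -1) with hB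
  rcases farkas_hom N A B with ⟨β, hβ, hsum⟩ | ⟨v, hv, hBv⟩
  · right
    have hsum' : ∑ i, β i • ((c i, -q i) : V × ℝ) = ((0, -1) : V × ℝ) := by
      have := congrArg (WithLp.linearEquiv 2 ℝ (V × ℝ)) hsum
      simpa [map_sum, hA, hB] using this
    have h1 : ∑ i, β i • c i = 0 := by
      have := congrArg Prod.fst hsum'
      simpa [Prod.fst_sum] using this
    have h2 : ∑ i, β i * (-q i) = -1 := by
      have := congrArg Prod.snd hsum'
      simpa [Prod.snd_sum, smul_eq_mul] using this
    refine ⟨β, hβ, h1, ?_⟩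
    have : ∑ i, β i * q i = 1 := by
      have := h2
      simp only [mul_neg, Finset.sum_neg_distrib] at this
      linarith
    simp [this]
  · left
    set u : V := (WithLp.equiv 2 (V × ℝ) v).1 with hu1
    set t : ℝ := (WithLp.equiv 2 (V × ℝ) v).2 with ht1
    have hinner : ∀ i, (0:ℝ) ≤ inner ℝ (c i) u + (-q i) * t := by
      intro i
      have := hv i
      rw [hA, WithLp.prod_inner_apply] at this
      simp [RCLike.inner_apply] at this
      have e1 : v.snd = t := rfl
      have e2 : v.fst = u := rfl
      rw [e1, e2] at this
      linarith
    have htpos : 0 < t := by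
      have := hBv
      rw [hB, WithLp.prod_inner_apply] at this
      simp [RCLike.inner_apply] at this
      have hv2 : t = v.snd := rfl
      rw [← hv2] at this
      linarith [this]
    refine ⟨t⁻¹ • u, fun i => ?_⟩
    rw [ge_iff_le, real_inner_smul_right, ← sub_nonneg]
    have heq : t⁻¹ * inner ℝ (c i) u - q i = (inner ℝ (c i) u + (-q i) * t) / t := by
      field_simp; ring
    rw [heq]
    exact div_nonneg (hinner i) htpos.le


/-- The `ζ₁ = 0, ζ₂ ≥ 0` branch of the CLF-BNCBF compatibility
characterization, via Farkas' lemma. -/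
theorem stmt_7 (m N : ℕ) (a : Fin N → EuclideanSpace ℝ (Fin m))
    (b : EuclideanSpace ℝ (Fin m)) (p : Fin N → ℝ) (s : ℝ)
    (h1 : ∀ β : Fin N → ℝ, (∀ i, 0 ≤ β i) → ∑ i, β i • a i = b →
        s + ∑ i, β i * (-(p i)) ≥ 0)
    (h2 : ∃ u : EuclideanSpace ℝ (Fin m), ∀ i, inner ℝ (a i) u ≥ p i) :
    ∃ u : EuclideanSpace ℝ (Fin m),
      (∀ i, inner ℝ (a i) u ≥ p i) ∧ inner ℝ b u ≤ (s : ℝ) := by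
  obtain ⟨u0, hu0⟩ := h2
  set c : Fin (N+1) → EuclideanSpace ℝ (Fin m) := Fin.snoc a (-b) with hc
  set q : Fin (N+1) → ℝ := Fin.snoc p (-s) with hq
  rcases farkas_affine (N+1) c q with ⟨u, hu⟩ | ⟨β, hβ, hzero, hpos⟩
  · refine ⟨u, fun i => ?_, ?_⟩
    · have := hu i.castSucc
      rw [hc, hq, Fin.snoc_castSucc, Fin.snoc_castSucc] at this
      exact this
    · have := hu (Fin.last N)
      rw [hc, hq, Fin.snoc_last, Fin.snoc_last, inner_neg_left] at this
      linarith
  · exfalso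
    rw [Fin.sum_univ_castSucc] at hzero hpos
    rw [hc] at hzero
    rw [hq] at hpos
    simp only [Fin.snoc_castSucc, Fin.snoc_last] at hzero hpos
    set μ : ℝ := β (Fin.last N) with hμ
    have hμ0 : 0 ≤ μ := hβ (Fin.last N)
    have hzero' : ∑ i : Fin N, β i.castSucc • a i = μ • b := by
      have h := hzero
      rw [smul_neg, add_neg_eq_zero] at h
      exact h
    rcases eq_or_lt_of_le hμ0 with hμeq | hμpos
    · -- μ = 0
      have hz : ∑ i : Fin N, β i.castSucc • a i = 0 := by
        rw [hzero', ← hμeq, zero_smul]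
      have hie : (0:ℝ) = ∑ i : Fin N, β i.castSucc * inner ℝ (a i) u0 := by
        have := congrArg (fun v : EuclideanSpace ℝ (Fin m) => (inner ℝ v u0 : ℝ)) hz
        simp only [sum_inner, real_inner_smul_left, inner_zero_left] at this
        exact this.symm
      have hge : ∑ i : Fin N, β i.castSucc * p i
          ≤ ∑ i : Fin N, β i.castSucc * inner ℝ (a i) u0 := by
        refine Finset.sum_le_sum fun i _ => ?_
        exact mul_le_mul_of_nonneg_left (hu0 i) (hβ i.castSucc)
      rw [← hμeq] at hpos
      simp only [zero_mul, add_zero] at hpos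
      linarith
    · -- μ > 0
      set β' : Fin N → ℝ := fun i => β i.castSucc / μ with hβ'
      have hβ'pos : ∀ i, 0 ≤ β' i := fun i => div_nonneg (hβ i.castSucc) hμ0
      have hsum' : ∑ i, β' i • a i = b := by
        have : ∑ i, β' i • a i = μ⁻¹ • ∑ i : Fin N, β i.castSucc • a i := by
          rw [Finset.smul_sum]
          refine Finset.sum_congr rfl fun i _ => ?_
          rw [hβ', smul_smul]
          congr 1
          field_simp
        rw [this, hzero', smul_smul, inv_mul_cancel₀ (ne_of_gt hμpos), one_smul]
      have hh := h1 β' hβ'pos hsum'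
      have hexp : ∑ i, β' i * (-(p i)) = -(∑ i : Fin N, β i.castSucc * p i) / μ := by
        rw [← Finset.sum_neg_distrib, Finset.sum_div]
        refine Finset.sum_congr rfl fun i _ => ?_
        rw [hβ']
        field_simp
      rw [hexp] at hh
      have hμs : ∑ i : Fin N, β i.castSucc * p i ≤ μ * s := by
        have h3 : -(∑ i : Fin N, β i.castSucc * p i) / μ ≥ -s := by linarith
        rw [ge_iff_le, le_div_iff₀ hμpos] at h3
        linarith
      nlinarith [hpos, hμs]
end

section
/- Let g : ℝⁿ → ℝⁿˣⁿ with g(x) invertible, y ∈ ℝⁿ, and û(x) = -((x-y)ᵀf(x) + ‖x-y‖²)/‖g(x)ᵀ(x-y)‖² · g(x)ᵀ(x-y) for x ≠ y. Then ‖û(x)‖ ≤ ‖g(x)⁻¹‖ (‖f(x)‖ + ‖x-y‖), where ‖g(x)⁻¹‖ is the operator norm. -/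
/-- Boundedness estimate `‖û(x)‖ ≤ ‖g(x)⁻¹‖ (‖f(x)‖ + ‖x-y‖)` for the
minimum-norm CLF controller, in terms of the operator norm of `g(x)⁻¹`. -/
theorem stmt_9 (n : ℕ)
    (f : EuclideanSpace ℝ (Fin n) → EuclideanSpace ℝ (Fin n))
    (g ginv : EuclideanSpace ℝ (Fin n) →
      (EuclideanSpace ℝ (Fin n) →L[ℝ] EuclideanSpace ℝ (Fin n)))
    (hinv : ∀ x, (g x).comp (ginv x) = ContinuousLinearMap.id ℝ _ ∧
      (ginv x).comp (g x) = ContinuousLinearMap.id ℝ _)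
    (y : EuclideanSpace ℝ (Fin n))
    (uhat : EuclideanSpace ℝ (Fin n) → EuclideanSpace ℝ (Fin n))
    (huhat : ∀ x, uhat x =
      (-((inner ℝ (x - y) (f x) + ‖x - y‖ ^ 2) /
          ‖(ContinuousLinearMap.adjoint (g x)) (x - y)‖ ^ 2 : ℝ)) •
        (ContinuousLinearMap.adjoint (g x)) (x - y)) :
    ∀ x, x ≠ y → ‖uhat x‖ ≤ ‖ginv x‖ * (‖f x‖ + ‖x - y‖) := by
  intro x hxy
  set v := x - y with hv
  have hvne : v ≠ 0 := sub_ne_zero.mpr hxy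
  have hcomp : (ContinuousLinearMap.adjoint (ginv x)).comp
      (ContinuousLinearMap.adjoint (g x)) = ContinuousLinearMap.id ℝ _ := by
    rw [← ContinuousLinearMap.adjoint_comp, (hinv x).1, ContinuousLinearMap.adjoint_id]
  have hrec : ContinuousLinearMap.adjoint (ginv x)
      ((ContinuousLinearMap.adjoint (g x)) v) = v := by
    have := congrArg (fun T => T v) hcomp
    simpa using this
  have hAvne : (ContinuousLinearMap.adjoint (g x)) v ≠ 0 := by
    intro h
    apply hvne
    rw [← hrec, h, map_zero]
  have hAvpos : (0:ℝ) < ‖(ContinuousLinearMap.adjoint (g x)) v‖ := norm_pos_iff.mpr hAvne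
  have hvle : ‖v‖ ≤ ‖ginv x‖ * ‖(ContinuousLinearMap.adjoint (g x)) v‖ := by
    have h := (ContinuousLinearMap.adjoint (ginv x)).le_opNorm
      ((ContinuousLinearMap.adjoint (g x)) v)
    rw [hrec] at h
    rwa [ContinuousLinearMap.adjoint.norm_map] at h
  have hnum : |(inner ℝ v (f x) + ‖v‖ ^ 2 : ℝ)| ≤ ‖v‖ * (‖f x‖ + ‖v‖) := by
    calc |(inner ℝ v (f x) + ‖v‖ ^ 2 : ℝ)| ≤ |(inner ℝ v (f x) : ℝ)| + |‖v‖ ^ 2| :=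
        abs_add_le _ _
      _ ≤ ‖v‖ * ‖f x‖ + ‖v‖ * ‖v‖ := by
        have h1 := abs_real_inner_le_norm v (f x)
        have h2 : |‖v‖ ^ 2| = ‖v‖ * ‖v‖ := by
          rw [abs_of_nonneg (by positivity)]; ring
        linarith
      _ = ‖v‖ * (‖f x‖ + ‖v‖) := by ring
  rw [huhat x, norm_smul]
  rw [Real.norm_eq_abs, abs_neg, abs_div, abs_of_nonneg (by positivity :
    (0:ℝ) ≤ ‖(ContinuousLinearMap.adjoint (g x)) v‖ ^ 2)]
  rw [div_mul_eq_mul_div, div_le_iff₀ (by positivity)]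
  calc |(inner ℝ v (f x) + ‖v‖ ^ 2 : ℝ)| * ‖(ContinuousLinearMap.adjoint (g x)) v‖
      ≤ (‖v‖ * (‖f x‖ + ‖v‖)) * ‖(ContinuousLinearMap.adjoint (g x)) v‖ := by
        apply mul_le_mul_of_nonneg_right hnum hAvpos.le
    _ ≤ (‖ginv x‖ * ‖(ContinuousLinearMap.adjoint (g x)) v‖ * (‖f x‖ + ‖v‖)) *
        ‖(ContinuousLinearMap.adjoint (g x)) v‖ := by
        apply mul_le_mul_of_nonneg_right _ hAvpos.le
        apply mul_le_mul_of_nonneg_right hvle (by positivity)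
    _ = ‖ginv x‖ * (‖f x‖ + ‖v‖) * ‖(ContinuousLinearMap.adjoint (g x)) v‖ ^ 2 := by
        ring
end
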